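/- Let σ > 0 and let f : ℝⁿ → [0,1] be measurable with σ-smoothed transform f̂(x) = E_{X ~ N(0, σ² Iₙ)}[f(x + X)] taking values in (0,1). Then the map x ↦ Φ⁻¹(f̂(x)) is (1/σ)-Lipschitz with respect to the Euclidean norm: for all x, y ∈ ℝⁿ, |Φ⁻¹(f̂(x)) - Φ⁻¹(f̂(y))| ≤ ‖x - y‖₂ / σ. -/

import Mathlib

open MeasureTheory Real

open Set Filter

/-- The `n`-dimensional isotropic Gaussian measure `N(0, σ² Iₙ)`, with density
`(2πσ²)^{-n/2} exp(-‖t‖²/(2σ²))` with respect to Lebesgue measure. -/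
noncomputable def isoGaussian (n : ℕ) (σ : ℝ) : Measure (EuclideanSpace ℝ (Fin n)) :=
  volume.withDensity fun t =>
    ENNReal.ofReal ((2 * π * σ ^ 2) ^ (-(n : ℝ) / 2) * Real.exp (-‖t‖ ^ 2 / (2 * σ ^ 2)))

/-- The standard Gaussian CDF `Φ(a) = (1/√(2π)) ∫_{-∞}^a exp(-s²/2) ds`. -/
noncomputable def stdGaussianCDF (a : ℝ) : ℝ :=
  (Real.sqrt (2 * π))⁻¹ * ∫ s in Set.Iic a, Real.exp (-s ^ 2 / 2)

/-- The inverse `Φ⁻¹ : (0,1) → ℝ` of the standard Gaussian CDF. -/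
noncomputable def stdGaussianCDFInv : ℝ → ℝ :=
  Function.invFun stdGaussianCDF

variable {n : ℕ}

lemma integrable_gauss1 : Integrable (fun s : ℝ => rexp (-s ^ 2 / 2)) := by
  have := integrable_exp_neg_mul_sq (by norm_num : (0:ℝ) < 1/2)
  convert this using 2 with s
  ring_nf

lemma gauss1_total : ∫ s : ℝ, rexp (-s ^ 2 / 2) = Real.sqrt (2 * π) := by
  have := integral_gaussian (1/2 : ℝ)
  rw [show (π / (1/2) : ℝ) = 2 * π by ring] at this
  rw [← this]
  congr 1 with s
  ring_nf

lemma sqrt_two_pi_pos : (0:ℝ) < Real.sqrt (2 * π) :=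
  Real.sqrt_pos.2 (by positivity)

lemma iic_decomp (a : ℝ) : ∫ s in Set.Iic a, rexp (-s ^ 2 / 2)
    = (∫ s in Set.Iic (0:ℝ), rexp (-s ^ 2 / 2)) + ∫ s in (0:ℝ)..a, rexp (-s ^ 2 / 2) := by
  have := intervalIntegral.integral_Iic_sub_Iic (a := (0:ℝ)) (b := a)
    (integrable_gauss1.integrableOn) (integrable_gauss1.integrableOn)
  linarith

lemma stdGaussianCDF_strictMono : StrictMono stdGaussianCDF := by
  intro a b hab
  unfold stdGaussianCDF
  have h1 : ∫ s in Set.Iic b, rexp (-s ^ 2 / 2)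
      = (∫ s in Set.Iic a, rexp (-s ^ 2 / 2)) + ∫ s in Set.Ioc a b, rexp (-s ^ 2 / 2) := by
    rw [← MeasureTheory.setIntegral_union (Set.Iic_disjoint_Ioc le_rfl)
      measurableSet_Ioc integrable_gauss1.integrableOn integrable_gauss1.integrableOn,
      Set.Iic_union_Ioc_eq_Iic hab.le]
  have h2 : 0 < ∫ s in Set.Ioc a b, rexp (-s ^ 2 / 2) := by
    rw [← intervalIntegral.integral_of_le hab.le]
    exact intervalIntegral.intervalIntegral_pos_of_pos_on
      (integrable_gauss1.intervalIntegrable) (fun x _ => Real.exp_pos _) hab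
  rw [h1]
  exact mul_lt_mul_of_pos_left (by linarith) (inv_pos.2 sqrt_two_pi_pos)

lemma stdGaussianCDF_continuous : Continuous stdGaussianCDF := by
  have : stdGaussianCDF = fun a => (Real.sqrt (2 * π))⁻¹ *
      ((∫ s in Set.Iic (0:ℝ), rexp (-s ^ 2 / 2)) + ∫ s in (0:ℝ)..a, rexp (-s ^ 2 / 2)) := by
    funext a; rw [stdGaussianCDF, iic_decomp]
  rw [this]
  exact continuous_const.mul (continuous_const.add
    (intervalIntegral.continuous_primitive (fun a b => integrable_gauss1.intervalIntegrable) 0))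

lemma stdGaussianCDF_tendsto_atBot : Tendsto stdGaussianCDF atBot (nhds 0) := by
  have h2 := intervalIntegral_tendsto_integral_Iic (0:ℝ)
    (integrable_gauss1.integrableOn) (tendsto_id (α := ℝ))
  have key : Tendsto (fun a : ℝ => ∫ s in Set.Iic a, rexp (-s ^ 2 / 2)) atBot (nhds 0) := by
    have h3 : ∀ a : ℝ, ∫ s in Set.Iic a, rexp (-s ^ 2 / 2)
        = (∫ s in Set.Iic (0:ℝ), rexp (-s ^ 2 / 2)) - ∫ s in a..(0:ℝ), rexp (-s ^ 2 / 2) := by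
      intro a
      have := intervalIntegral.integral_Iic_sub_Iic (a := a) (b := (0:ℝ))
        (integrable_gauss1.integrableOn) (integrable_gauss1.integrableOn)
      linarith
    simp only [funext h3]
    have h4 := (tendsto_const_nhds
      (x := ∫ s in Set.Iic (0:ℝ), rexp (-s ^ 2 / 2)) (f := atBot (α := ℝ))).sub h2
    rw [sub_self] at h4
    simpa using h4
  have := (tendsto_const_nhds (x := (Real.sqrt (2 * π))⁻¹) (f := atBot (α := ℝ))).mul key
  rw [mul_zero] at this
  exact this

lemma stdGaussianCDF_tendsto_atTop : Tendsto stdGaussianCDF atTop (nhds 1) := by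
  have h2 := intervalIntegral_tendsto_integral_Ioi (0:ℝ)
    (integrable_gauss1.integrableOn) (tendsto_id (α := ℝ))
  have hsplit : (∫ s in Set.Iic (0:ℝ), rexp (-s ^ 2 / 2)) + (∫ s in Set.Ioi (0:ℝ), rexp (-s ^ 2 / 2))
      = Real.sqrt (2 * π) := by
    rw [← gauss1_total]
    exact intervalIntegral.integral_Iic_add_Ioi integrable_gauss1.integrableOn
      integrable_gauss1.integrableOn
  have key : Tendsto (fun a : ℝ => ∫ s in Set.Iic a, rexp (-s ^ 2 / 2)) atTop
      (nhds (Real.sqrt (2 * π))) := by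
    simp only [funext iic_decomp]
    rw [← hsplit]
    have h4 := (tendsto_const_nhds
      (x := ∫ s in Set.Iic (0:ℝ), rexp (-s ^ 2 / 2)) (f := atTop (α := ℝ))).add h2
    simpa using h4
  have := (tendsto_const_nhds (x := (Real.sqrt (2 * π))⁻¹) (f := atTop (α := ℝ))).mul key
  rw [inv_mul_cancel₀ sqrt_two_pi_pos.ne'] at this
  exact this

lemma stdGaussianCDF_surj {p : ℝ} (hp : p ∈ Set.Ioo (0:ℝ) 1) : ∃ a, stdGaussianCDF a = p := by
  obtain ⟨b, hb⟩ := (stdGaussianCDF_tendsto_atTop.eventually (eventually_gt_nhds hp.2)).exists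
  obtain ⟨a, ha⟩ := (stdGaussianCDF_tendsto_atBot.eventually (eventually_lt_nhds hp.1)).exists
  have hab : a ≤ b := by
    by_contra h
    push_neg at h
    exact absurd (stdGaussianCDF_strictMono h) (by linarith)
  obtain ⟨c, _, hc⟩ := intermediate_value_Icc hab stdGaussianCDF_continuous.continuousOn
    (Set.mem_Icc.2 ⟨ha.le, hb.le⟩)
  exact ⟨c, hc⟩

lemma stdGaussianCDFInv_cdf (a : ℝ) : stdGaussianCDFInv (stdGaussianCDF a) = a :=
  Function.leftInverse_invFun stdGaussianCDF_strictMono.injective a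

lemma integrable_wexp {σ : ℝ} (hσ : 0 < σ) :
    Integrable (fun t : EuclideanSpace ℝ (Fin n) => rexp (-‖t‖ ^ 2 / (2 * σ ^ 2))) := by
  have hb : (0:ℝ) < (2 * σ ^ 2)⁻¹ := by positivity
  have h := GaussianFourier.integrable_cexp_neg_mul_sq_norm_add
    (V := EuclideanSpace ℝ (Fin n)) (b := (((2 * σ ^ 2)⁻¹ : ℝ) : ℂ))
    (by simp only [Complex.ofReal_re]; exact hb) 0 0
  refine h.norm.congr (Filter.Eventually.of_forall fun v => ?_)
  have harg : (-(((2 * σ ^ 2)⁻¹ : ℝ) : ℂ) * (‖v‖ : ℂ) ^ 2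
      + 0 * ((inner ℝ (0 : EuclideanSpace ℝ (Fin n)) v : ℝ) : ℂ))
      = ((-‖v‖ ^ 2 / (2 * σ ^ 2) : ℝ) : ℂ) := by
    push_cast
    ring
  simp only [harg, Complex.norm_exp, Complex.ofReal_re]

lemma halfspace_integral {σ : ℝ} (hσ : 0 < σ) (hn : n ≠ 0)
    (u : EuclideanSpace ℝ (Fin n)) (hu : ‖u‖ = 1) (c : ℝ) :
    ∫ z : EuclideanSpace ℝ (Fin n),
      Set.indicator {z : EuclideanSpace ℝ (Fin n) | inner ℝ z u ≤ c}
        (fun z => rexp (-‖z‖ ^ 2 / (2 * σ ^ 2))) z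
    = (∫ s in Set.Iic c, rexp (-s ^ 2 / (2 * σ ^ 2)))
        * (∫ s : ℝ, rexp (-s ^ 2 / (2 * σ ^ 2))) ^ (n - 1) := by
  haveI : NeZero n := ⟨hn⟩
  -- orthonormal basis with b 0 = u
  have horto : Orthonormal ℝ (Set.restrict {(0 : Fin n)} (fun _ : Fin n => u)) := by
    rw [orthonormal_iff_ite]
    rintro ⟨i, hi⟩ ⟨j, hj⟩
    simp only [Set.mem_singleton_iff] at hi hj
    subst hi; subst hj
    have huu : (inner ℝ u u : ℝ) = 1 := by
      rw [real_inner_self_eq_norm_mul_norm, hu]; norm_num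
    simp [huu]
    exact Or.inl hu
  obtain ⟨b, hb⟩ := horto.exists_orthonormalBasis_extension_of_card_eq
    (by simp [finrank_euclideanSpace_fin])
  have hb0 : b 0 = u := hb 0 rfl
  -- rotate so that u becomes coordinate 0
  have h1 : ∫ z : EuclideanSpace ℝ (Fin n),
      Set.indicator {z : EuclideanSpace ℝ (Fin n) | inner ℝ z u ≤ c}
        (fun z => rexp (-‖z‖ ^ 2 / (2 * σ ^ 2))) z
      = ∫ ζ : EuclideanSpace ℝ (Fin n),
      Set.indicator {ζ : EuclideanSpace ℝ (Fin n) | ζ 0 ≤ c}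
        (fun ζ => rexp (-‖ζ‖ ^ 2 / (2 * σ ^ 2))) ζ := by
    rw [← (b.measurePreserving_repr_symm).integral_comp
      b.repr.symm.toHomeomorph.measurableEmbedding]
    congr 1 with ζ
    have hinner : (inner ℝ (b.repr.symm ζ) u : ℝ) = ζ 0 := by
      rw [← hb0, real_inner_comm, ← b.repr_apply_apply, LinearIsometryEquiv.apply_symm_apply]
    have hnorm : ‖b.repr.symm ζ‖ = ‖ζ‖ := b.repr.symm.norm_map ζ
    simp only [Set.indicator_apply, Set.mem_setOf_eq, hinner, hnorm]
  rw [h1]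
  -- pass to the pi space
  have h2 : ∫ ζ : EuclideanSpace ℝ (Fin n),
      Set.indicator {ζ : EuclideanSpace ℝ (Fin n) | ζ 0 ≤ c}
        (fun ζ => rexp (-‖ζ‖ ^ 2 / (2 * σ ^ 2))) ζ
      = ∫ v : Fin n → ℝ, ∏ i : Fin n,
        ((if i = 0 then Set.indicator (Set.Iic c) (fun _ => (1:ℝ)) (v i) else 1)
          * rexp (-(v i) ^ 2 / (2 * σ ^ 2))) := by
    rw [← ((EuclideanSpace.volume_preserving_symm_measurableEquiv_toLp (Fin n)).symm).integral_comp
      (MeasurableEquiv.measurableEmbedding _)]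
    congr 1 with v
    have hnorm : ‖(MeasurableEquiv.toLp 2 (Fin n → ℝ)).symm.symm v‖ ^ 2 = ∑ i, (v i) ^ 2 := by
      rw [EuclideanSpace.norm_eq]
      rw [Real.sq_sqrt (by positivity)]
      simp only [Real.norm_eq_abs, sq_abs]
      rfl
    have happ : ∀ i, ((MeasurableEquiv.toLp 2 (Fin n → ℝ)).symm.symm v) i = v i := fun _ => rfl
    rw [Finset.prod_mul_distrib]
    rw [Finset.prod_ite_eq' Finset.univ (0 : Fin n)
      (fun i => Set.indicator (Set.Iic c) (fun _ => (1:ℝ)) (v i))]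
    simp only [Finset.mem_univ, if_true]
    rw [← Real.exp_sum]
    have hsum : ∑ i, -(v i) ^ 2 / (2 * σ ^ 2) = -(∑ i, (v i) ^ 2) / (2 * σ ^ 2) := by
      rw [← Finset.sum_div, Finset.sum_neg_distrib]
    rw [hsum]
    simp only [Set.indicator_apply, Set.mem_setOf_eq, Set.mem_Iic, happ, hnorm]
    by_cases h : v 0 ≤ c <;> simp [h]
  rw [h2]
  rw [MeasureTheory.volume_pi, MeasureTheory.integral_fintype_prod_eq_prod
    (f := fun i s => (if i = 0 then Set.indicator (Set.Iic c) (fun _ => (1:ℝ)) s else 1)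
      * rexp (-s ^ 2 / (2 * σ ^ 2)))]
  rw [← Finset.mul_prod_erase Finset.univ _ (Finset.mem_univ (0 : Fin n))]
  have hterm0 : (∫ s : ℝ, (if (0:Fin n) = 0 then Set.indicator (Set.Iic c) (fun _ => (1:ℝ)) s else 1)
      * rexp (-s ^ 2 / (2 * σ ^ 2))) = ∫ s in Set.Iic c, rexp (-s ^ 2 / (2 * σ ^ 2)) := by
    simp only [if_true]
    rw [← MeasureTheory.integral_indicator measurableSet_Iic]
    congr 1 with s
    by_cases h : s ∈ Set.Iic c <;> simp [Set.indicator_apply, h]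
  have hterm : ∀ i : Fin n, i ≠ 0 → (∫ s : ℝ, (if i = 0 then Set.indicator (Set.Iic c) (fun _ => (1:ℝ)) s else 1)
      * rexp (-s ^ 2 / (2 * σ ^ 2))) = ∫ s : ℝ, rexp (-s ^ 2 / (2 * σ ^ 2)) := by
    intro i hi
    simp [hi]
  rw [hterm0, Finset.prod_congr rfl (fun i hi => hterm i (Finset.mem_erase.1 hi).1),
    Finset.prod_const, Finset.card_erase_of_mem (Finset.mem_univ _), Finset.card_univ,
    Fintype.card_fin]

lemma gauss_sigma_total {σ : ℝ} (hσ : 0 < σ) :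
    ∫ s : ℝ, rexp (-s ^ 2 / (2 * σ ^ 2)) = Real.sqrt (2 * π) * σ := by
  have hb : (0:ℝ) < (2 * σ ^ 2)⁻¹ := by positivity
  have h := integral_gaussian ((2 * σ ^ 2)⁻¹)
  have h2 : (fun s : ℝ => rexp (-((2 * σ ^ 2)⁻¹) * s ^ 2)) = fun s : ℝ => rexp (-s ^ 2 / (2 * σ ^ 2)) := by
    funext s
    congr 1
    field_simp
  rw [h2] at h
  rw [h]
  rw [show π / (2 * σ ^ 2)⁻¹ = (2 * π) * σ ^ 2 by field_simp]
  rw [Real.sqrt_mul (by positivity), Real.sqrt_sq hσ.le]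

lemma iic_scale {σ : ℝ} (hσ : 0 < σ) (c : ℝ) :
    ∫ s in Set.Iic c, rexp (-s ^ 2 / (2 * σ ^ 2)) = σ * ∫ r in Set.Iic (c / σ), rexp (-r ^ 2 / 2) := by
  have h := MeasureTheory.Measure.integral_comp_mul_left
    (g := Set.indicator (Set.Iic c) (fun s => rexp (-s ^ 2 / (2 * σ ^ 2)))) σ
  have h2 : (fun x : ℝ => Set.indicator (Set.Iic c) (fun s => rexp (-s ^ 2 / (2 * σ ^ 2))) (σ * x))
      = Set.indicator (Set.Iic (c / σ)) (fun r => rexp (-r ^ 2 / 2)) := by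
    funext x
    have hmem : σ * x ∈ Set.Iic c ↔ x ∈ Set.Iic (c / σ) := by
      simp only [Set.mem_Iic]
      rw [← le_div_iff₀' hσ]
    have hval : rexp (-(σ * x) ^ 2 / (2 * σ ^ 2)) = rexp (-x ^ 2 / 2) := by
      congr 1
      field_simp
    by_cases hx : x ∈ Set.Iic (c / σ)
    · rw [Set.indicator_of_mem (hmem.2 hx), Set.indicator_of_mem hx, hval]
    · rw [Set.indicator_of_notMem (fun hc => hx (hmem.1 hc)), Set.indicator_of_notMem hx]
  rw [h2] at h
  rw [MeasureTheory.integral_indicator measurableSet_Iic,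
    MeasureTheory.integral_indicator measurableSet_Iic] at h
  rw [smul_eq_mul] at h
  rw [abs_of_pos (inv_pos.2 hσ)] at h
  field_simp at h ⊢
  linarith

/-- The density of the isotropic Gaussian. -/
noncomputable def gaussDensity (n : ℕ) (σ : ℝ) (t : EuclideanSpace ℝ (Fin n)) : ℝ :=
  (2 * π * σ ^ 2) ^ (-(n : ℝ) / 2) * Real.exp (-‖t‖ ^ 2 / (2 * σ ^ 2))

lemma gaussDensity_nonneg {σ : ℝ} (t : EuclideanSpace ℝ (Fin n)) :
    0 ≤ gaussDensity n σ t := by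
  unfold gaussDensity
  positivity

lemma gaussDensity_continuous (σ : ℝ) :
    Continuous (gaussDensity n σ) := by
  unfold gaussDensity
  fun_prop

lemma gaussDensity_integrable {σ : ℝ} (hσ : 0 < σ) :
    Integrable (gaussDensity n σ) := by
  unfold gaussDensity
  exact (integrable_wexp hσ).const_mul _

lemma gaussDensity_shift_integrable {σ : ℝ} (hσ : 0 < σ) (v : EuclideanSpace ℝ (Fin n)) :
    Integrable (fun z : EuclideanSpace ℝ (Fin n) => gaussDensity n σ (z - v)) :=
  (gaussDensity_integrable hσ).comp_sub_right v

lemma const_algebra {σ : ℝ} (hσ : 0 < σ) (hn : n ≠ 0) :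
    ((2 * π * σ ^ 2 : ℝ) ^ (-(n : ℝ) / 2)) * (Real.sqrt (2 * π) * σ) ^ (n - 1)
      = (Real.sqrt (2 * π) * σ)⁻¹ := by
  have hA : (0:ℝ) < 2 * π * σ ^ 2 := by positivity
  have h1 : Real.sqrt (2 * π) * σ = Real.sqrt (2 * π * σ ^ 2) := by
    rw [Real.sqrt_mul (by positivity : (0:ℝ) ≤ 2 * π), Real.sqrt_sq hσ.le]
  rw [h1, Real.sqrt_eq_rpow]
  rw [← Real.rpow_natCast ((2 * π * σ ^ 2 : ℝ) ^ ((1:ℝ)/2)) (n-1), ← Real.rpow_mul hA.le,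
    ← Real.rpow_add hA]
  have hexp : -(n : ℝ) / 2 + 1 / 2 * ((n - 1 : ℕ) : ℝ) = -(1/2) := by
    rw [Nat.cast_sub (Nat.one_le_iff_ne_zero.2 hn)]
    push_cast
    ring
  rw [hexp, show (-(1/2) : ℝ) = -(1/2) from rfl, Real.rpow_neg hA.le]

lemma halfspace_cdf {σ : ℝ} (hσ : 0 < σ) (hn : n ≠ 0)
    (u : EuclideanSpace ℝ (Fin n)) (hu : ‖u‖ = 1) (c : ℝ) :
    ∫ z : EuclideanSpace ℝ (Fin n),
      Set.indicator {z : EuclideanSpace ℝ (Fin n) | inner ℝ z u ≤ c} (gaussDensity n σ) z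
    = stdGaussianCDF (c / σ) := by
  have hsplit : ∀ z : EuclideanSpace ℝ (Fin n),
      Set.indicator {z : EuclideanSpace ℝ (Fin n) | inner ℝ z u ≤ c} (gaussDensity n σ) z
      = (2 * π * σ ^ 2 : ℝ) ^ (-(n : ℝ) / 2) *
        Set.indicator {z : EuclideanSpace ℝ (Fin n) | inner ℝ z u ≤ c}
          (fun z => rexp (-‖z‖ ^ 2 / (2 * σ ^ 2))) z := by
    intro z
    by_cases hz : z ∈ {z : EuclideanSpace ℝ (Fin n) | inner ℝ z u ≤ c}
    · rw [Set.indicator_of_mem hz, Set.indicator_of_mem hz]; rfl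
    · rw [Set.indicator_of_notMem hz, Set.indicator_of_notMem hz, mul_zero]
  simp only [hsplit]
  rw [MeasureTheory.integral_const_mul, halfspace_integral hσ hn u hu c,
    gauss_sigma_total hσ, iic_scale hσ c]
  have halg := const_algebra hσ hn (σ := σ)
  have hs : Real.sqrt (2 * π) ≠ 0 := sqrt_two_pi_pos.ne'
  calc (2 * π * σ ^ 2 : ℝ) ^ (-(n : ℝ) / 2) *
        ((σ * ∫ r in Set.Iic (c / σ), rexp (-r ^ 2 / 2)) * (Real.sqrt (2 * π) * σ) ^ (n - 1))
      = ((2 * π * σ ^ 2 : ℝ) ^ (-(n : ℝ) / 2) * (Real.sqrt (2 * π) * σ) ^ (n - 1)) *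
        (σ * ∫ r in Set.Iic (c / σ), rexp (-r ^ 2 / 2)) := by ring
    _ = (Real.sqrt (2 * π) * σ)⁻¹ * (σ * ∫ r in Set.Iic (c / σ), rexp (-r ^ 2 / 2)) := by
        rw [halg]
    _ = (Real.sqrt (2 * π))⁻¹ * ∫ r in Set.Iic (c / σ), rexp (-r ^ 2 / 2) := by
        rw [mul_inv]
        field_simp
    _ = stdGaussianCDF (c / σ) := rfl

lemma shifted_halfspace_cdf {σ : ℝ} (hσ : 0 < σ) (hn : n ≠ 0)
    (u : EuclideanSpace ℝ (Fin n)) (hu : ‖u‖ = 1) (x v : EuclideanSpace ℝ (Fin n)) (c : ℝ) :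
    ∫ z : EuclideanSpace ℝ (Fin n),
      Set.indicator {z : EuclideanSpace ℝ (Fin n) | inner ℝ (z - x) u ≤ c}
        (fun z => gaussDensity n σ (z - v)) z
    = stdGaussianCDF ((c - (inner ℝ (v - x) u : ℝ)) / σ) := by
  rw [← MeasureTheory.integral_add_left_eq_self
    (fun z : EuclideanSpace ℝ (Fin n) =>
      Set.indicator {z : EuclideanSpace ℝ (Fin n) | inner ℝ (z - x) u ≤ c}
        (fun z => gaussDensity n σ (z - v)) z) v]
  have hpt : ∀ t : EuclideanSpace ℝ (Fin n),
      Set.indicator {z : EuclideanSpace ℝ (Fin n) | inner ℝ (z - x) u ≤ c}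
        (fun z => gaussDensity n σ (z - v)) (v + t)
      = Set.indicator {t : EuclideanSpace ℝ (Fin n) | inner ℝ t u ≤ c - (inner ℝ (v - x) u : ℝ)}
        (gaussDensity n σ) t := by
    intro t
    have hmem : (v + t ∈ {z : EuclideanSpace ℝ (Fin n) | inner ℝ (z - x) u ≤ c})
        ↔ (t ∈ {t : EuclideanSpace ℝ (Fin n) | inner ℝ t u ≤ c - (inner ℝ (v - x) u : ℝ)}) := by
      simp only [Set.mem_setOf_eq]
      have : v + t - x = t + (v - x) := by abel
      rw [this, inner_add_left]
      constructor <;> intro h <;> linarith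
    have hval : v + t - v = t := by abel
    by_cases ht : t ∈ {t : EuclideanSpace ℝ (Fin n) | inner ℝ t u ≤ c - (inner ℝ (v - x) u : ℝ)}
    · rw [Set.indicator_of_mem (hmem.2 ht), Set.indicator_of_mem ht, hval]
    · rw [Set.indicator_of_notMem (fun hc => ht (hmem.1 hc)), Set.indicator_of_notMem ht]
  simp only [hpt]
  exact halfspace_cdf hσ hn u hu _

lemma fhat_repr {σ : ℝ} (hσ : 0 < σ) (f : EuclideanSpace ℝ (Fin n) → ℝ)
    (x : EuclideanSpace ℝ (Fin n)) :
    ∫ t, f (x + t) ∂(isoGaussian n σ) = ∫ z, f z * gaussDensity n σ (z - x) := by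
  have hd : Measurable fun t : EuclideanSpace ℝ (Fin n) => (gaussDensity n σ t).toNNReal :=
    measurable_real_toNNReal.comp (gaussDensity_continuous σ).measurable
  have hiso : isoGaussian n σ
      = volume.withDensity fun t => ((gaussDensity n σ t).toNNReal : ENNReal) := rfl
  rw [hiso, _root_.integral_withDensity_eq_integral_smul hd]
  have h2 : ∀ t : EuclideanSpace ℝ (Fin n),
      (gaussDensity n σ t).toNNReal • f (x + t)
      = f (x + t) * gaussDensity n σ (x + t - x) := by
    intro t
    have hxt : x + t - x = t := by abel
    rw [hxt, NNReal.smul_def, smul_eq_mul, Real.coe_toNNReal _ (gaussDensity_nonneg t), mul_comm]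
  simp only [h2]
  exact MeasureTheory.integral_add_left_eq_self (fun z => f z * gaussDensity n σ (z - x)) x

lemma prod_integrable {σ : ℝ} (hσ : 0 < σ) (f : EuclideanSpace ℝ (Fin n) → ℝ)
    (hf : Measurable f) (hf01 : ∀ t, f t ∈ Set.Icc (0:ℝ) 1) (v : EuclideanSpace ℝ (Fin n)) :
    Integrable fun z => f z * gaussDensity n σ (z - v) :=
  (gaussDensity_shift_integrable hσ v).bdd_mul (c := 1) hf.aestronglyMeasurable
    (Filter.Eventually.of_forall fun z => by
      rw [Real.norm_eq_abs, abs_le]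
      exact ⟨by linarith [(hf01 z).1], (hf01 z).2⟩)

lemma halfspace_meas (x u : EuclideanSpace ℝ (Fin n)) (c : ℝ) :
    MeasurableSet {z : EuclideanSpace ℝ (Fin n) | (inner ℝ (z - x) u : ℝ) ≤ c} := by
  have hcont : Continuous fun z : EuclideanSpace ℝ (Fin n) => (inner ℝ (z - x) u : ℝ) :=
    Continuous.inner (continuous_id.sub continuous_const) continuous_const
  exact (isClosed_le hcont continuous_const).measurableSet

lemma key_onesided (n : ℕ) (σ : ℝ) (hσ : 0 < σ)
    (f : EuclideanSpace ℝ (Fin n) → ℝ) (hf : Measurable f)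
    (hf01 : ∀ t, f t ∈ Set.Icc (0 : ℝ) 1)
    (fhat : EuclideanSpace ℝ (Fin n) → ℝ)
    (hfhat : ∀ x, fhat x = ∫ t, f (x + t) ∂(isoGaussian n σ))
    (hfhat01 : ∀ x, fhat x ∈ Set.Ioo (0 : ℝ) 1)
    (x y : EuclideanSpace ℝ (Fin n)) :
    stdGaussianCDFInv (fhat x) - stdGaussianCDFInv (fhat y) ≤ ‖x - y‖ / σ := by
  by_cases hxy : x = y
  · subst hxy
    simp only [sub_self]
    positivity
  have hn : n ≠ 0 := by
    rintro rfl
    exact hxy ((WithLp.ext_iff 2).2 (funext fun i => i.elim0))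
  set δ := y - x with hδdef
  have hδ : δ ≠ 0 := sub_ne_zero.2 (Ne.symm hxy)
  set d := ‖δ‖ with hddef
  have hd : 0 < d := norm_pos_iff.2 hδ
  set u := d⁻¹ • δ with hu_def
  have hu : ‖u‖ = 1 := norm_smul_inv_norm hδ
  have hdu : d • u = δ := by rw [hu_def, smul_smul, mul_inv_cancel₀ hd.ne', one_smul]
  obtain ⟨a, ha⟩ := stdGaussianCDF_surj (hfhat01 x)
  obtain ⟨b', hb'⟩ := stdGaussianCDF_surj (hfhat01 y)
  set S := {z : EuclideanSpace ℝ (Fin n) | (inner ℝ (z - x) u : ℝ) ≤ σ * a} with hSdef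
  have hx0 : (inner ℝ (x - x) u : ℝ) = 0 := by rw [sub_self, inner_zero_left]
  have hyx : (inner ℝ (y - x) u : ℝ) = d := by
    have h1 : (inner ℝ δ u : ℝ) = d⁻¹ * (inner ℝ δ δ : ℝ) := by rw [hu_def, real_inner_smul_right]
    show (inner ℝ δ u : ℝ) = d
    rw [h1, real_inner_self_eq_norm_mul_norm, ← hddef]
    field_simp
  have h3 : ∫ z, Set.indicator S (fun z => gaussDensity n σ (z - x)) z = stdGaussianCDF a := by
    have h := shifted_halfspace_cdf hσ hn u hu x x (σ * a)
    rw [hx0, sub_zero, mul_div_cancel_left₀ a hσ.ne'] at h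
    exact h
  have h4 : ∫ z, Set.indicator S (fun z => gaussDensity n σ (z - y)) z
      = stdGaussianCDF (a - d / σ) := by
    have h := shifted_halfspace_cdf hσ hn u hu x y (σ * a)
    rw [hyx] at h
    rw [h]
    congr 1
    field_simp
  set C := (2 * π * σ ^ 2 : ℝ) ^ (-(n:ℝ) / 2) with hCdef
  have hCpos : 0 < C := by rw [hCdef]; positivity
  set κ := (2 * d * (σ * a) - d ^ 2) / (2 * σ ^ 2) with hκdef
  set k := rexp κ with hkdef
  have h2σ : (0:ℝ) < 2 * σ ^ 2 := by positivity
  have h5 : ∀ z, 0 ≤ (f z - Set.indicator S (fun _ => (1:ℝ)) z)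
      * (gaussDensity n σ (z - y) - k * gaussDensity n σ (z - x)) := by
    intro z
    set s := (inner ℝ (z - x) u : ℝ) with hsdef
    have hnorm : ‖z - y‖ ^ 2 = ‖z - x‖ ^ 2 - 2 * (d * s) + d ^ 2 := by
      have hzy : z - y = (z - x) - δ := by rw [hδdef]; abel
      have hin : (inner ℝ (z - x) δ : ℝ) = d * s := by rw [← hdu, real_inner_smul_right]
      rw [hzy, norm_sub_sq_real, hin, ← hddef]
    have hcond : gaussDensity n σ (z - y) ≤ k * gaussDensity n σ (z - x) ↔ s ≤ σ * a := by
      have hky : k * gaussDensity n σ (z - x)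
          = C * rexp (κ + -‖z - x‖ ^ 2 / (2 * σ ^ 2)) := by
        unfold gaussDensity
        rw [Real.exp_add, ← hCdef]
        ring
      have hgy : gaussDensity n σ (z - y) = C * rexp (-‖z - y‖ ^ 2 / (2 * σ ^ 2)) := rfl
      rw [hky, hgy, mul_le_mul_iff_right₀ hCpos, Real.exp_le_exp, hκdef, hnorm]
      rw [← add_div, div_le_div_iff_of_pos_right h2σ]
      constructor <;> intro h <;> nlinarith [hd]
    by_cases hz : z ∈ S
    · rw [Set.indicator_of_mem hz]
      have h1 : f z - 1 ≤ 0 := by linarith [(hf01 z).2]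
      have h2 : gaussDensity n σ (z - y) - k * gaussDensity n σ (z - x) ≤ 0 :=
        sub_nonpos.2 (hcond.2 hz)
      have := mul_nonneg (neg_nonneg.2 h1) (neg_nonneg.2 h2)
      rwa [neg_mul_neg] at this
    · rw [Set.indicator_of_notMem hz]
      have h1 : 0 ≤ f z - 0 := by rw [sub_zero]; exact (hf01 z).1
      have h2 : k * gaussDensity n σ (z - x) ≤ gaussDensity n σ (z - y) :=
        le_of_lt (not_le.1 fun hc => hz (hcond.1 hc))
      exact mul_nonneg h1 (sub_nonneg.2 h2)
  have hineq : (0:ℝ) ≤ ∫ z, (f z - Set.indicator S (fun _ => (1:ℝ)) z)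
      * (gaussDensity n σ (z - y) - k * gaussDensity n σ (z - x)) :=
    MeasureTheory.integral_nonneg h5
  have hSmeas : MeasurableSet S := halfspace_meas x u (σ * a)
  have e1 : Integrable fun z => f z * gaussDensity n σ (z - y) :=
    prod_integrable hσ f hf hf01 y
  have e2 : Integrable fun z => f z * gaussDensity n σ (z - x) :=
    prod_integrable hσ f hf hf01 x
  have e3 : Integrable (Set.indicator S fun z => gaussDensity n σ (z - y)) :=
    (gaussDensity_shift_integrable hσ y).indicator hSmeas
  have e4 : Integrable (Set.indicator S fun z => gaussDensity n σ (z - x)) :=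
    (gaussDensity_shift_integrable hσ x).indicator hSmeas
  have hexpand : (fun z => (f z - Set.indicator S (fun _ => (1:ℝ)) z)
      * (gaussDensity n σ (z - y) - k * gaussDensity n σ (z - x)))
      = fun z => (f z * gaussDensity n σ (z - y) - k * (f z * gaussDensity n σ (z - x)))
        - ((Set.indicator S fun z => gaussDensity n σ (z - y)) z
          - k * (Set.indicator S fun z => gaussDensity n σ (z - x)) z) := by
    funext z
    by_cases hz : z ∈ S
    · simp only [Set.indicator_of_mem hz]
      ring
    · simp only [Set.indicator_of_notMem hz]
      ring
  rw [hexpand] at hineq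
  have e2' : Integrable fun z => k * (f z * gaussDensity n σ (z - x)) := e2.const_mul k
  have e4' : Integrable fun z =>
      k * Set.indicator S (fun z => gaussDensity n σ (z - x)) z := e4.const_mul k
  have e12 : Integrable fun z =>
      f z * gaussDensity n σ (z - y) - k * (f z * gaussDensity n σ (z - x)) := e1.sub e2'
  have e34 : Integrable fun z =>
      Set.indicator S (fun z => gaussDensity n σ (z - y)) z
        - k * Set.indicator S (fun z => gaussDensity n σ (z - x)) z := e3.sub e4'
  rw [MeasureTheory.integral_sub e12 e34,
    MeasureTheory.integral_sub e1 e2',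
    MeasureTheory.integral_sub e3 e4',
    MeasureTheory.integral_const_mul, MeasureTheory.integral_const_mul] at hineq
  have hfy : fhat y = ∫ z, f z * gaussDensity n σ (z - y) := by
    rw [hfhat y, fhat_repr hσ f y]
  have hfx : fhat x = ∫ z, f z * gaussDensity n σ (z - x) := by
    rw [hfhat x, fhat_repr hσ f x]
  rw [← hfy, ← hfx, h3, h4] at hineq
  have hge : stdGaussianCDF (a - d / σ) ≤ fhat y := by
    have hxa : fhat x = stdGaussianCDF a := ha.symm
    rw [hxa] at hineq
    linarith
  have hb'ge : a - d / σ ≤ b' := by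
    by_contra h
    push_neg at h
    have := stdGaussianCDF_strictMono h
    rw [hb'] at this
    linarith
  calc stdGaussianCDFInv (fhat x) - stdGaussianCDFInv (fhat y)
      = a - b' := by rw [← ha, ← hb', stdGaussianCDFInv_cdf, stdGaussianCDFInv_cdf]
    _ ≤ d / σ := by linarith
    _ = ‖x - y‖ / σ := by rw [hddef, hδdef, norm_sub_rev]


/-- for `σ > 0` and measurable `f : ℝⁿ → [0,1]` whose σ-smoothed
transform `f̂(x) = E_{X ~ N(0,σ²Iₙ)}[f(x + X)]` takes values in `(0,1)`, the map
`x ↦ Φ⁻¹(f̂(x))` is `(1/σ)`-Lipschitz for the Euclidean norm. -/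
theorem probit_smoothed_lipschitz (n : ℕ) (σ : ℝ) (hσ : 0 < σ)
    (f : EuclideanSpace ℝ (Fin n) → ℝ) (hf : Measurable f)
    (hf01 : ∀ t, f t ∈ Set.Icc (0 : ℝ) 1)
    (fhat : EuclideanSpace ℝ (Fin n) → ℝ)
    (hfhat : ∀ x, fhat x = ∫ t, f (x + t) ∂(isoGaussian n σ))
    (hfhat01 : ∀ x, fhat x ∈ Set.Ioo (0 : ℝ) 1) :
    ∀ x y : EuclideanSpace ℝ (Fin n),
      |stdGaussianCDFInv (fhat x) - stdGaussianCDFInv (fhat y)| ≤ ‖x - y‖ / σ := by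
  intro x y
  rw [abs_sub_le_iff]
  refine ⟨key_onesided n σ hσ f hf hf01 fhat hfhat hfhat01 x y, ?_⟩
  have h := key_onesided n σ hσ f hf hf01 fhat hfhat hfhat01 y x
  rwa [norm_sub_rev] at h
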